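/- (Theorem 3.1) Let A be a commutative group, X a commutative partial monoid, i : A → X injective with free action, i(A) ⊆ C ⊆ X a submonoid, and φ : C → A × C/A a trivialisation. Then there exists a trivialisation φ' : X → A × X/A extending φ (φ'|_C = φ) if and only if the obstruction class [β] ∈ H²(X/A, C/A; A) vanishes. -/

import Mathlib

/-- A commutative partial monoid: addition is partially defined (via `Option`),
commutative, unital, and associative where defined. -/
structure PCM (X : Type*) where
  add : X → X → Option X
  zero : X
  comm : ∀ x y, add x y = add y x
  zero_add : ∀ x, add zero x = some x
  assoc : ∀ x y z xy yz, add x y = some xy → add y z = some yz →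
    add xy z = add x yz

/-- Homomorphism of commutative partial monoids. -/
def PCM.IsHom {X Y : Type*} (MX : PCM X) (MY : PCM Y) (f : X → Y) : Prop :=
  f MX.zero = MY.zero ∧
  ∀ x y z, MX.add x y = some z → MY.add (f x) (f y) = some (f z)

/-- `i : A → X` is an injective homomorphism of the group `A` into the
partial monoid `X` such that `i a + x` is always defined. -/
structure EmbedData {A X : Type*} [AddCommGroup A] (MX : PCM X) (i : A → X) : Prop where
  inj : Function.Injective i
  map_zero : i 0 = MX.zero
  map_add : ∀ a b, MX.add (i a) (i b) = some (i (a + b))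
  total : ∀ a x, (MX.add (i a) x).isSome

/-- The action `l_A : (a, x) ↦ i a + x` is free. -/
def FreeAction {A X : Type*} [AddCommGroup A] (MX : PCM X) (i : A → X) : Prop :=
  ∀ a a' x y, MX.add (i a) x = some y → MX.add (i a') x = some y → a = a'

/-- `π : X → Q` presents `Q` as the orbit space `X/A` of the action of `A` on `X`
via `i`, with the induced partial monoid structure. -/
structure QuotData {A X Q : Type*} [AddCommGroup A] (MX : PCM X) (MQ : PCM Q)
    (i : A → X) (π : X → Q) : Prop where
  surj : Function.Surjective π
  orbit : ∀ x y, π x = π y ↔ ∃ a, MX.add (i a) x = some y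
  hom : MX.IsHom MQ π
  lift : ∀ x y q, MQ.add (π x) (π y) = some q → (MX.add x y).isSome

/-- A left splitting of `A → X → X/A`: a homomorphism `s : X → A` with `s ∘ i = id`. -/
def IsLeftSplit {A X : Type*} [AddCommGroup A] (MX : PCM X) (i : A → X) (s : X → A) : Prop :=
  s MX.zero = 0 ∧
  (∀ x y z, MX.add x y = some z → s z = s x + s y) ∧
  (∀ a, s (i a) = a)

/-- A right splitting of `A → X → X/A`: a homomorphism `h : X/A → X` with `π ∘ h = id`. -/
def IsRightSplit {X Q : Type*} (MX : PCM X) (MQ : PCM Q)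
    (π : X → Q) (h : Q → X) : Prop :=
  MQ.IsHom MX h ∧ ∀ q, π (h q) = q

/-- A trivialisation `φ : X → A × X/A`: a homomorphism (into the product
partial monoid) with `φ ∘ i = in₁` and `proj₂ ∘ φ = π`. -/
def IsTriv {A X Q : Type*} [AddCommGroup A] (MX : PCM X) (MQ : PCM Q)
    (i : A → X) (π : X → Q) (φ : X → A × Q) : Prop :=
  φ MX.zero = (0, MQ.zero) ∧
  (∀ x y z, MX.add x y = some z →
    MQ.add (φ x).2 (φ y).2 = some (φ z).2 ∧ (φ z).1 = (φ x).1 + (φ y).1) ∧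
  (∀ a, φ (i a) = (a, MQ.zero)) ∧
  (∀ x, (φ x).2 = π x)

/-- A local trivialisation `φ : C → A × C/A` of the restriction of the sequence
to a submonoid `i(A) ⊆ C ⊆ X` (presented as a function on all of `X` whose
values off `C` are irrelevant). -/
def IsLocalTriv {A X Q : Type*} [AddCommGroup A] (MX : PCM X) (MQ : PCM Q)
    (i : A → X) (π : X → Q) (C : Set X) (φ : X → A × Q) : Prop :=
  (∀ x y z, x ∈ C → y ∈ C → MX.add x y = some z →
    MQ.add (φ x).2 (φ y).2 = some (φ z).2 ∧ (φ z).1 = (φ x).1 + (φ y).1) ∧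
  (∀ a, φ (i a) = (a, MQ.zero)) ∧
  (∀ x, x ∈ C → (φ x).2 = π x)

/-- `C` is a total submonoid of the partial monoid `X` containing `i(A)`. -/
def IsSubPCM {A X : Type*} [AddCommGroup A] (MX : PCM X) (i : A → X) (C : Set X) : Prop :=
  MX.zero ∈ C ∧
  (∀ a, i a ∈ C) ∧
  (∀ x y, x ∈ C → y ∈ C → (MX.add x y).isSome) ∧
  (∀ x y z, x ∈ C → y ∈ C → MX.add x y = some z → z ∈ C)

/-- `η : X/A → X` is a set-theoretic section of `π` (a choice of orbit
representatives). -/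
def IsSection {X Q : Type*} (π : X → Q) (η : Q → X) : Prop :=
  ∀ q, π (η q) = q

/-- `η` agrees with the right splitting `φ⁻¹ ∘ in₂` determined by the local
trivialisation `φ` on `C/A`: for `x ∈ C`, `η([x]) = x − i((φ x).1)`. -/
def AgreesOnC {A X Q : Type*} [AddCommGroup A] (MX : PCM X)
    (i : A → X) (π : X → Q) (C : Set X) (φ : X → A × Q) (η : Q → X) : Prop :=
  ∀ x ∈ C, MX.add (i (-(φ x).1)) x = some (η (π x))

/-- `β : X/A × X/A → A` is the 2-cochain measuring the failure of `η` to be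
a homomorphism: `η(q₁ + q₂) = η(q₁) + η(q₂) + i(β(q₁, q₂))` whenever
`q₁ + q₂` is defined. -/
def BetaSpec {A X Q : Type*} [AddCommGroup A] (MX : PCM X) (MQ : PCM Q)
    (i : A → X) (η : Q → X) (β : Q → Q → A) : Prop :=
  ∀ q₁ q₂ q₁₂, MQ.add q₁ q₂ = some q₁₂ →
    ∃ w, MX.add (η q₁) (η q₂) = some w ∧
      MX.add (i (β q₁ q₂)) w = some (η q₁₂)

section Aux
variable {A X : Type*} [AddCommGroup A] {MX : PCM X} {i : A → X}

lemma PCM.add_zero' (MX : PCM X) (x : X) : MX.add x MX.zero = some x := by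
  rw [MX.comm]; exact MX.zero_add x

lemma cancel_aux (hemb : EmbedData MX i) {a : A} {x y : X}
    (h : MX.add (i a) x = some y) : MX.add (i (-a)) y = some x := by
  have h2 := MX.assoc (i (-a)) (i a) x (i (-a + a)) y (hemb.map_add _ _) h
  rw [← h2, neg_add_cancel, hemb.map_zero, MX.zero_add]

lemma pull_aux (hemb : EmbedData MX i) {a : A} {v uv w s : X}
    (h1 : MX.add (i a) v = some uv) (h2 : MX.add uv w = some s) :
    ∃ t, MX.add v w = some t ∧ MX.add (i a) t = some s := by
  have hc := cancel_aux hemb h1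
  have h3 := MX.assoc (i (-a)) uv w v s hc h2
  obtain ⟨t, ht⟩ := Option.isSome_iff_exists.mp (hemb.total (-a) s)
  refine ⟨t, by rw [h3, ht], ?_⟩
  have h4 := cancel_aux hemb ht
  rwa [neg_neg] at h4

end Aux

/-- Theorem 3.1: a local trivialisation `φ : C → A × C/A` extends to a
trivialisation `φ' : X → A × X/A` if and only if the obstruction class
`[β] ∈ H²(X/A, C/A; A)` vanishes, i.e. iff the obstruction cocycle `β`
(defined from any section `η` agreeing with `φ⁻¹ ∘ in₂` on `C/A`) is the
coboundary `d¹γ` of some relative 1-cochain `γ ∈ C¹(X/A, C/A; A)`. -/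
theorem extension_iff_obstruction_vanishes {A X Q : Type*} [AddCommGroup A]
    (MX : PCM X) (MQ : PCM Q) (i : A → X) (π : X → Q)
    (hemb : EmbedData MX i) (hquot : QuotData MX MQ i π)
    (hfree : FreeAction MX i)
    (C : Set X) (hC : IsSubPCM MX i C)
    (φ : X → A × Q) (hφ : IsLocalTriv MX MQ i π C φ)
    (η : Q → X) (hη : IsSection π η) (hagree : AgreesOnC MX i π C φ η)
    (β : Q → Q → A) (hβ : BetaSpec MX MQ i η β) :
    (∃ φ' : X → A × Q, IsTriv MX MQ i π φ' ∧ ∀ x ∈ C, φ' x = φ x) ↔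
    (∃ γ : Q → A, (∀ x ∈ C, γ (π x) = 0) ∧
      ∀ q₁ q₂ q₁₂, MQ.add q₁ q₂ = some q₁₂ →
        β q₁ q₂ = γ q₂ - γ q₁₂ + γ q₁) := by
  obtain ⟨hC0, hCa, hCtot, hCcl⟩ := hC
  obtain ⟨hφadd, hφi, hφπ⟩ := hφ
  have hπ0 : π MX.zero = MQ.zero := hquot.hom.1
  have hφ01 : (φ MX.zero).1 = 0 := by
    have h := (hφadd MX.zero MX.zero MX.zero hC0 hC0 (MX.zero_add _)).2
    exact left_eq_add.mp h
  have hη0 : η MQ.zero = MX.zero := by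
    have h := hagree MX.zero hC0
    rw [hφ01, neg_zero, hemb.map_zero, MX.zero_add] at h
    rw [← hπ0]
    exact (Option.some_inj.mp h).symm
  have hπi : ∀ a, π (i a) = MQ.zero := by
    intro a
    rw [← hπ0]
    refine (hquot.orbit (i a) MX.zero).mpr ⟨-a, ?_⟩
    rw [hemb.map_add, neg_add_cancel, hemb.map_zero]
  constructor
  · rintro ⟨φ', ⟨hφ'0, hφ'add, hφ'i, hφ'π⟩, hext⟩
    refine ⟨fun q => -(φ' (η q)).1, ?_, ?_⟩
    · intro x hxC
      have h := (hφ'add _ _ _ (hagree x hxC)).2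
      rw [hφ'i, hext x hxC] at h
      simp only [h, neg_add_cancel, neg_zero]
    · intro q₁ q₂ q₁₂ hq
      obtain ⟨w, hw1, hw2⟩ := hβ q₁ q₂ q₁₂ hq
      have h1 := (hφ'add _ _ _ hw1).2
      have h2 := (hφ'add _ _ _ hw2).2
      rw [hφ'i, h1] at h2
      have hb : β q₁ q₂ = (φ' (η q₁₂)).1 - (φ' (η q₁)).1 - (φ' (η q₂)).1 := by
        rw [h2]; abel
      rw [hb]
      show _ = -(φ' (η q₂)).1 - -(φ' (η q₁₂)).1 + -(φ' (η q₁)).1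
      rw [sub_neg_eq_add]; abel
  · rintro ⟨γ, hγC, hγβ⟩
    have hrepex : ∀ x : X, ∃ a, MX.add (i a) (η (π x)) = some x := fun x =>
      (hquot.orbit (η (π x)) x).mp (hη (π x))
    set rep : X → A := fun x => Classical.choose (hrepex x) with hrepdef
    have hrepspec : ∀ x, MX.add (i (rep x)) (η (π x)) = some x := fun x =>
      Classical.choose_spec (hrepex x)
    have hrepuniq : ∀ x a, MX.add (i a) (η (π x)) = some x → rep x = a :=
      fun x a h => hfree _ _ _ _ (hrepspec x) h
    have hrepC : ∀ x ∈ C, rep x = (φ x).1 := by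
      intro x hxC
      refine hrepuniq x _ ?_
      have h := cancel_aux hemb (hagree x hxC)
      rwa [neg_neg] at h
    have hg0 : γ MQ.zero = 0 := by rw [← hπ0]; exact hγC _ hC0
    refine ⟨fun x => (rep x - γ (π x), π x), ⟨?_, ?_, ?_, fun x => rfl⟩, ?_⟩
    · have hr0 : rep MX.zero = 0 := by
        refine hrepuniq MX.zero 0 ?_
        rw [hπ0, hη0, hemb.map_zero, MX.zero_add]
      simp only [hr0, hπ0, hg0, sub_zero]
    · intro x y z hxyz
      have hπz : MQ.add (π x) (π y) = some (π z) := hquot.hom.2 x y z hxyz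
      refine ⟨hπz, ?_⟩
      obtain ⟨w, hw1, hw2⟩ := hβ (π x) (π y) (π z) hπz
      obtain ⟨t₁, ht₁, hxt₁⟩ := pull_aux hemb (hrepspec x) hxyz
      obtain ⟨t₂, ht₂, hyt₂⟩ := pull_aux hemb (hrepspec y)
        (by rw [MX.comm]; exact ht₁)
      have hwt : t₂ = w := by
        rw [MX.comm] at ht₂
        exact Option.some_inj.mp (ht₂.symm.trans hw1)
      rw [hwt] at hyt₂
      have hsum : MX.add (i (rep x + rep y)) w = some z :=
        (MX.assoc (i (rep x)) (i (rep y)) w (i (rep x + rep y)) t₁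
          (hemb.map_add _ _) hyt₂).trans hxt₁
      have hwneg := cancel_aux hemb hw2
      have hz : MX.add (i (rep x + rep y + -(β (π x) (π y)))) (η (π z)) = some z :=
        (MX.assoc (i (rep x + rep y)) (i (-(β (π x) (π y)))) (η (π z))
          (i (rep x + rep y + -(β (π x) (π y)))) w (hemb.map_add _ _) hwneg).trans hsum
      have hrepz : rep z = rep x + rep y + -(β (π x) (π y)) := hrepuniq z _ hz
      show rep z - γ (π z) = (rep x - γ (π x)) + (rep y - γ (π y))
      rw [hrepz, hγβ (π x) (π y) (π z) hπz]
      abel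
    · intro a
      have hra : rep (i a) = a := by
        refine hrepuniq (i a) a ?_
        rw [hπi, hη0, MX.add_zero']
      simp only [hra, hπi, hg0, sub_zero]
    · intro x hxC
      have h2 := hφπ x hxC
      simp only [hrepC x hxC, hγC x hxC, sub_zero]
      rw [← h2]
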